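/- For x > 0, ψ(x) + 1/x - ln(x) > 1/(2x) - 1/(12x²) + 1/(120x⁴) - 1/(252x⁶), where ψ is the digamma function. -/

import Mathlib

open Real Filter Topology Set

noncomputable def digamma (x : ℝ) : ℝ := deriv Real.Gamma x / Real.Gamma x

noncomputable def trigamma (x : ℝ) : ℝ := deriv digamma x

/-! ### Auxiliary definitions -/

noncomputable def Pfun (t : ℝ) : ℝ :=
  1 / (2 * t) + 1 / (12 * t ^ 2) - 1 / (120 * t ^ 4) + 1 / (252 * t ^ 6)

noncomputable def Dfun (t : ℝ) : ℝ :=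
  Real.log (t + 1) - Real.log t - t⁻¹ + Pfun t - Pfun (t + 1)

noncomputable def Rfun (t : ℝ) : ℝ := digamma t - Real.log t + Pfun t

lemma hasDerivAt_Pfun {t : ℝ} (ht : 0 < t) :
    HasDerivAt Pfun
      (-1 / (2 * t ^ 2) - 1 / (6 * t ^ 3) + 1 / (30 * t ^ 5) - 1 / (42 * t ^ 7)) t := by
  have ht' : t ≠ 0 := ht.ne'
  have h1 : HasDerivAt (fun y : ℝ => (2 * y)⁻¹) (-2 / (2 * t) ^ 2) t := by
    have := ((hasDerivAt_id t).const_mul 2).inv (by positivity)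
    exact this.congr_deriv (by norm_num)
  have h2 : HasDerivAt (fun y : ℝ => (12 * y ^ 2)⁻¹)
      (-(12 * (2 * t)) / (12 * t ^ 2) ^ 2) t := by
    have := ((hasDerivAt_pow 2 t).const_mul 12).inv (by positivity)
    exact this.congr_deriv (by norm_num)
  have h3 : HasDerivAt (fun y : ℝ => (120 * y ^ 4)⁻¹)
      (-(120 * (4 * t ^ 3)) / (120 * t ^ 4) ^ 2) t := by
    have := ((hasDerivAt_pow 4 t).const_mul 120).inv (by positivity)
    exact this.congr_deriv (by norm_num)
  have h4 : HasDerivAt (fun y : ℝ => (252 * y ^ 6)⁻¹)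
      (-(252 * (6 * t ^ 5)) / (252 * t ^ 6) ^ 2) t := by
    have := ((hasDerivAt_pow 6 t).const_mul 252).inv (by positivity)
    exact this.congr_deriv (by norm_num)
  have h : Pfun = fun y : ℝ =>
      (2 * y)⁻¹ + (12 * y ^ 2)⁻¹ - (120 * y ^ 4)⁻¹ + (252 * y ^ 6)⁻¹ := by
    funext y; simp only [Pfun, one_div]
  rw [h]
  exact (((h1.add h2).sub h3).add h4).congr_deriv (by field_simp; ring)

lemma hasDerivAt_Dfun {t : ℝ} (ht : 0 < t) :
    HasDerivAt Dfun
      (-(63 * t ^ 4 + 126 * t ^ 3 + 98 * t ^ 2 + 35 * t + 5) /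
        (210 * t ^ 7 * (t + 1) ^ 7)) t := by
  have ht1 : (0 : ℝ) < t + 1 := by linarith
  have hlog1 : HasDerivAt (fun y : ℝ => Real.log (y + 1)) (t + 1)⁻¹ t :=
    HasDerivAt.comp_add_const t 1 (Real.hasDerivAt_log ht1.ne')
  have hlog : HasDerivAt Real.log t⁻¹ t := Real.hasDerivAt_log ht.ne'
  have hinv : HasDerivAt (fun y : ℝ => y⁻¹) (-(t ^ 2)⁻¹) t := hasDerivAt_inv ht.ne'
  have hP : HasDerivAt Pfun
      (-1 / (2 * t ^ 2) - 1 / (6 * t ^ 3) + 1 / (30 * t ^ 5) - 1 / (42 * t ^ 7)) t :=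
    hasDerivAt_Pfun ht
  have hP1 : HasDerivAt (fun y : ℝ => Pfun (y + 1))
      (-1 / (2 * (t + 1) ^ 2) - 1 / (6 * (t + 1) ^ 3) + 1 / (30 * (t + 1) ^ 5)
        - 1 / (42 * (t + 1) ^ 7)) t :=
    HasDerivAt.comp_add_const t 1 (hasDerivAt_Pfun ht1)
  exact ((((hlog1.sub hlog).sub hinv).add hP).sub hP1).congr_deriv (by
    field_simp
    ring)

lemma deriv_Dfun_neg {t : ℝ} (ht : 0 < t) : deriv Dfun t < 0 := by
  rw [(hasDerivAt_Dfun ht).deriv]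
  exact div_neg_of_neg_of_pos (neg_lt_zero.mpr (by positivity)) (by positivity)

lemma strictAntiOn_Dfun : StrictAntiOn Dfun (Ioi 0) := by
  refine strictAntiOn_of_deriv_neg (convex_Ioi 0) ?_ ?_
  · exact fun t ht => ((hasDerivAt_Dfun ht).continuousAt).continuousWithinAt
  · intro t ht
    rw [interior_Ioi] at ht
    exact deriv_Dfun_neg ht

lemma tendsto_Pfun : Tendsto Pfun atTop (𝓝 0) := by
  have h : ∀ (c : ℝ), 0 < c → ∀ n : ℕ, n ≠ 0 →
      Tendsto (fun t : ℝ => 1 / (c * t ^ n)) atTop (𝓝 0) := by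
    intro c hc n hn
    simp only [one_div]
    exact ((tendsto_pow_atTop hn).const_mul_atTop hc).inv_tendsto_atTop
  have h1 := h 2 two_pos 1 one_ne_zero
  have h2 := h 12 (by norm_num) 2 (by norm_num)
  have h3 := h 120 (by norm_num) 4 (by norm_num)
  have h4 := h 252 (by norm_num) 6 (by norm_num)
  have hc := ((h1.add h2).sub h3).add h4
  simp only [pow_one] at hc
  rw [show (0:ℝ) + 0 - 0 + 0 = 0 by norm_num] at hc
  exact hc

lemma tendsto_log_succ_sub : Tendsto (fun t : ℝ => Real.log (t + 1) - Real.log t) atTop (𝓝 0) := by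
  have h1 : Tendsto (fun t : ℝ => Real.log (1 + t⁻¹)) atTop (𝓝 0) := by
    have h0 : Tendsto (fun t : ℝ => 1 + t⁻¹) atTop (𝓝 (1 + 0)) :=
      tendsto_inv_atTop_zero.const_add 1
    have := ((Real.continuousAt_log one_ne_zero).tendsto).comp (by simpa using h0)
    simpa [Function.comp_def] using this
  apply h1.congr'
  filter_upwards [eventually_gt_atTop (0 : ℝ)] with t ht
  rw [show (1 + t⁻¹ : ℝ) = (t + 1) / t by field_simp,
    Real.log_div (by positivity) ht.ne']

lemma tendsto_Dfun : Tendsto Dfun atTop (𝓝 0) := by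
  have hB : Tendsto (fun t : ℝ => t⁻¹) atTop (𝓝 0) := tendsto_inv_atTop_zero
  have hD : Tendsto (fun t : ℝ => Pfun (t + 1)) atTop (𝓝 0) := by
    have := tendsto_Pfun.comp (tendsto_atTop_add_const_right atTop (1:ℝ) tendsto_id)
    simpa [Function.comp_def] using this
  have hc := (((tendsto_log_succ_sub.sub hB).add tendsto_Pfun).sub hD)
  rw [show (0:ℝ) - 0 + 0 - 0 = 0 by norm_num] at hc
  exact hc

lemma Dfun_nonneg {t : ℝ} (ht : 0 < t) : 0 ≤ Dfun t := by
  refine le_of_tendsto tendsto_Dfun ?_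
  filter_upwards [eventually_gt_atTop t] with u hu
  exact (strictAntiOn_Dfun ht (ht.trans hu) hu).le

lemma Dfun_pos {t : ℝ} (ht : 0 < t) : 0 < Dfun t :=
  lt_of_le_of_lt (Dfun_nonneg (by linarith : (0:ℝ) < t + 1))
    (strictAntiOn_Dfun ht (by simp only [mem_Ioi]; linarith) (by linarith))

/-! ### Digamma facts -/

lemma hasDerivAt_logGamma {x : ℝ} (hx : 0 < x) :
    HasDerivAt (fun y => Real.log (Real.Gamma y)) (digamma x) x := by
  have hd : DifferentiableAt ℝ Real.Gamma x :=
    Real.differentiableAt_Gamma fun m => by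
      have : (0:ℝ) ≤ m := m.cast_nonneg
      intro h; rw [h] at hx; linarith
  exact hd.hasDerivAt.log (Real.Gamma_pos_of_pos hx).ne'

lemma digamma_rec {x : ℝ} (hx : 0 < x) : digamma (x + 1) = digamma x + 1 / x := by
  have h1 : HasDerivAt (fun y => Real.log (Real.Gamma (y + 1))) (digamma (x + 1)) x :=
    HasDerivAt.comp_add_const x 1 (hasDerivAt_logGamma (by linarith))
  have h2 : HasDerivAt (fun y => Real.log y + Real.log (Real.Gamma y))
      (x⁻¹ + digamma x) x := (Real.hasDerivAt_log hx.ne').add (hasDerivAt_logGamma hx)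
  have heq : (fun y => Real.log (Real.Gamma (y + 1))) =ᶠ[𝓝 x]
      (fun y => Real.log y + Real.log (Real.Gamma y)) := by
    filter_upwards [eventually_gt_nhds hx] with y hy
    rw [Real.Gamma_add_one hy.ne', Real.log_mul hy.ne' (Real.Gamma_pos_of_pos hy).ne']
  have := (h1.congr_of_eventuallyEq heq.symm).unique h2
  rw [this, one_div]
  ring

lemma digamma_le_log {x : ℝ} (hx : 0 < x) : digamma x ≤ Real.log x := by
  have hc : ConvexOn ℝ (Ioi 0) (Real.log ∘ Real.Gamma) := Real.convexOn_log_Gamma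
  have hd : DifferentiableAt ℝ (Real.log ∘ Real.Gamma) x :=
    (hasDerivAt_logGamma hx).differentiableAt
  have h := hc.deriv_le_slope (mem_Ioi.mpr hx) (mem_Ioi.mpr (by linarith : (0:ℝ) < x + 1))
    (by linarith) hd
  have hderiv : deriv (Real.log ∘ Real.Gamma) x = digamma x := by
    rw [Function.comp_def]; exact (hasDerivAt_logGamma hx).deriv
  rw [hderiv] at h
  refine h.trans (le_of_eq ?_)
  rw [slope_def_field, show x + 1 - x = (1:ℝ) by ring, div_one, Function.comp_apply,
    Function.comp_apply, Real.Gamma_add_one hx.ne',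
    Real.log_mul hx.ne' (Real.Gamma_pos_of_pos hx).ne']
  ring

lemma log_le_digamma_add {x : ℝ} (hx : 0 < x) : Real.log x ≤ digamma x + 1 / x := by
  have hc : ConvexOn ℝ (Ioi 0) (Real.log ∘ Real.Gamma) := Real.convexOn_log_Gamma
  have hd : DifferentiableAt ℝ (Real.log ∘ Real.Gamma) (x + 1) :=
    (hasDerivAt_logGamma (by linarith : (0:ℝ) < x + 1)).differentiableAt
  have h := hc.slope_le_deriv (mem_Ioi.mpr hx) (mem_Ioi.mpr (by linarith : (0:ℝ) < x + 1))
    (by linarith) hd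
  have hderiv : deriv (Real.log ∘ Real.Gamma) (x + 1) = digamma (x + 1) := by
    rw [Function.comp_def]; exact (hasDerivAt_logGamma (by linarith)).deriv
  rw [hderiv, digamma_rec hx] at h
  refine (le_of_eq ?_).trans h
  rw [slope_def_field, show x + 1 - x = (1:ℝ) by ring, div_one, Function.comp_apply,
    Function.comp_apply, Real.Gamma_add_one hx.ne',
    Real.log_mul hx.ne' (Real.Gamma_pos_of_pos hx).ne']
  ring

lemma Rfun_rec {x : ℝ} (hx : 0 < x) : Rfun x = Dfun x + Rfun (x + 1) := by
  simp only [Rfun, Dfun]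
  rw [digamma_rec hx, one_div]
  ring

lemma tendsto_Rfun (x : ℝ) (hx : 0 < x) :
    Tendsto (fun n : ℕ => Rfun (x + n)) atTop (𝓝 0) := by
  have hy : ∀ n : ℕ, (0:ℝ) < x + n := fun n => by positivity
  have hnat : Tendsto (fun n : ℕ => x + (n:ℝ)) atTop atTop :=
    tendsto_atTop_add_const_left atTop x tendsto_natCast_atTop_atTop
  have hP : Tendsto (fun n : ℕ => Pfun (x + n)) atTop (𝓝 0) := by
    have := tendsto_Pfun.comp hnat
    simpa [Function.comp_def] using this
  have hI : Tendsto (fun n : ℕ => (x + (n:ℝ))⁻¹) atTop (𝓝 0) :=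
    hnat.inv_tendsto_atTop
  have hPm : Tendsto (fun n : ℕ => Pfun (x + n) - (x + (n:ℝ))⁻¹) atTop (𝓝 (0 - 0)) :=
    hP.sub hI
  refine tendsto_of_tendsto_of_tendsto_of_le_of_le (by simpa using hPm) hP ?_ ?_
  · intro n
    have := log_le_digamma_add (hy n)
    rw [one_div] at this
    simp only [Rfun]
    linarith
  · intro n
    have := digamma_le_log (hy n)
    simp only [Rfun]
    linarith

theorem digamma_lower (x : ℝ) (hx : 0 < x) :
    1 / (2 * x) - 1 / (12 * x ^ 2) + 1 / (120 * x ^ 4) - 1 / (252 * x ^ 6) <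
      digamma x + 1 / x - Real.log x := by
  have key : 0 < Rfun x := by
    have hstep : ∀ n : ℕ, Dfun x + Rfun (x + (n + 1 : ℕ)) ≤ Rfun x := by
      intro n
      induction n with
      | zero => simpa using (Rfun_rec hx).ge
      | succ n ih =>
        have hxn : (0:ℝ) < x + (n + 1 : ℕ) := by positivity
        have h1 := Rfun_rec hxn
        have hD := Dfun_pos hxn
        have hcast : x + ((n + 1 : ℕ) : ℝ) + 1 = x + ((n + 1 + 1 : ℕ) : ℝ) := by
          push_cast; ring
        rw [hcast] at h1
        linarith
    have hlim : Tendsto (fun n : ℕ => Dfun x + Rfun (x + (n + 1 : ℕ))) atTop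
        (𝓝 (Dfun x + 0)) := by
      apply Tendsto.const_add
      exact (tendsto_Rfun x hx).comp (tendsto_add_atTop_nat 1)
    have : Dfun x + 0 ≤ Rfun x := le_of_tendsto hlim (Eventually.of_forall hstep)
    have := Dfun_pos hx
    linarith
  have hx2 : x ≠ 0 := hx.ne'
  have e1 : 1 / x - 1 / (2 * x) = 1 / (2 * x) := by field_simp; ring
  simp only [Rfun, Pfun] at key
  linarith
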